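/- Let ‖·‖ be a norm on ℝ^d whose unit ball is strictly convex, and let A₁, …, A_k be finite sets in ℝ^d such that, writing D for the diameter of ⋃_i A_i, one has ‖p − q‖ = D > 0 for all p ∈ A_i, q ∈ A_j with i ≠ j, and the diameter of each individual A_i is strictly less than D. Then {A₁, …, A_k} is a strictly antipodal family. -/

import Mathlib

open Pointwise Filter

noncomputable section

/-- A set in `ℝ^d` is convexly independent if no point of it lies in the
convex hull of the other points. -/
def ConvInd {d : ℕ} (S : Set (Fin d → ℝ)) : Prop :=
  ∀ p ∈ S, p ∉ convexHull ℝ (S \ {p})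

/-- `Efun d n` : the maximum, over `n`-point sets `P ⊂ ℝ^d`, of the number of
unordered pairs of distinct points of `P` whose midpoints are pairwise distinct
and form a convexly independent set.  Unordered pairs are encoded as ordered
pairs with the reversed pair excluded. -/
def Efun (d n : ℕ) : ℕ :=
  sSup {k | ∃ (P : Finset (Fin d → ℝ)) (T : Finset ((Fin d → ℝ) × (Fin d → ℝ))),
    P.card = n ∧
    (∀ e ∈ T, e.1 ∈ P ∧ e.2 ∈ P ∧ e.1 ≠ e.2 ∧ (e.2, e.1) ∉ T) ∧
    Set.InjOn (fun e : (Fin d → ℝ) × (Fin d → ℝ) => midpoint ℝ e.1 e.2) ↑T ∧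
    ConvInd ((fun e : (Fin d → ℝ) × (Fin d → ℝ) => midpoint ℝ e.1 e.2) '' ↑T) ∧
    T.card = k}

/-- `Mfun d m n` : the maximum, over `m`-point sets `P` and `n`-point sets `Q` in `ℝ^d`,
of the size of a convexly independent subset of the Minkowski sum `P + Q`. -/
def Mfun (d m n : ℕ) : ℕ :=
  sSup {k | ∃ P Q S : Finset (Fin d → ℝ),
    P.card = m ∧ Q.card = n ∧
    (S : Set (Fin d → ℝ)) ⊆ (P : Set (Fin d → ℝ)) + (Q : Set (Fin d → ℝ)) ∧
    ConvInd (S : Set (Fin d → ℝ)) ∧ S.card = k}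

/-- A norm on `ℝ^d` whose unit ball is strictly convex (the unit sphere contains
no nondegenerate segment, expressed via midpoints of distinct unit vectors). -/
structure StrictNorm (d : ℕ) where
  toFun : (Fin d → ℝ) → ℝ
  eq_zero_iff : ∀ x, toFun x = 0 ↔ x = 0
  smul_eq : ∀ (a : ℝ) (x : Fin d → ℝ), toFun (a • x) = |a| * toFun x
  add_le : ∀ x y, toFun (x + y) ≤ toFun x + toFun y
  strictly_convex : ∀ x y, toFun x = 1 → toFun y = 1 → x ≠ y →
    toFun ((1 / 2 : ℝ) • (x + y)) < 1

/-- A (not necessarily strictly convex) norm on `ℝ^d`. -/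
structure NormOn (d : ℕ) where
  toFun : (Fin d → ℝ) → ℝ
  eq_zero_iff : ∀ x, toFun x = 0 ↔ x = 0
  smul_eq : ∀ (a : ℝ) (x : Fin d → ℝ), toFun (a • x) = |a| * toFun x
  add_le : ∀ x y, toFun (x + y) ≤ toFun x + toFun y

/-- `Wfun d n` : the maximum, over `n`-point sets `S ⊂ ℝ^d` and strictly convex
norms on `ℝ^d`, of the number of pairwise nonparallel unit-distance pairs in `S`.
(The nonparallelity condition between distinct ordered pairs automatically rules
out listing any unordered pair twice.) -/
def Wfun (d n : ℕ) : ℕ :=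
  sSup {k | ∃ (S : Finset (Fin d → ℝ)) (ν : StrictNorm d)
      (T : Finset ((Fin d → ℝ) × (Fin d → ℝ))),
    S.card = n ∧
    (∀ e ∈ T, e.1 ∈ S ∧ e.2 ∈ S ∧ ν.toFun (e.1 - e.2) = 1) ∧
    (∀ e ∈ T, ∀ f ∈ T, e ≠ f → ∀ c : ℝ, e.1 - e.2 ≠ c • (f.1 - f.2)) ∧
    T.card = k}

/-- `Ufun d n` : the maximum, over `n`-point sets `S ⊂ ℝ^d` and strictly convex
norms on `ℝ^d`, of the number of unordered unit-distance pairs in `S`. -/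
def Ufun (d n : ℕ) : ℕ :=
  sSup {k | ∃ (S : Finset (Fin d → ℝ)) (ν : StrictNorm d)
      (T : Finset ((Fin d → ℝ) × (Fin d → ℝ))),
    S.card = n ∧
    (∀ e ∈ T, e.1 ∈ S ∧ e.2 ∈ S ∧ e.1 ≠ e.2 ∧ ν.toFun (e.1 - e.2) = 1 ∧ (e.2, e.1) ∉ T) ∧
    T.card = k}

/-- `Dfun d n` : the maximum, over `n`-point sets `S ⊂ ℝ^d` and strictly convex
norms on `ℝ^d`, of the number of unordered diameter pairs in `S` (pairs of points
whose distance equals the diameter `D` of `S` in the norm). -/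
def Dfun (d n : ℕ) : ℕ :=
  sSup {k | ∃ (S : Finset (Fin d → ℝ)) (ν : StrictNorm d)
      (T : Finset ((Fin d → ℝ) × (Fin d → ℝ))) (D : ℝ),
    S.card = n ∧
    (∀ p ∈ S, ∀ q ∈ S, ν.toFun (p - q) ≤ D) ∧
    (∃ p ∈ S, ∃ q ∈ S, ν.toFun (p - q) = D) ∧
    (∀ e ∈ T, e.1 ∈ S ∧ e.2 ∈ S ∧ e.1 ≠ e.2 ∧ ν.toFun (e.1 - e.2) = D ∧ (e.2, e.1) ∉ T) ∧
    T.card = k}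

/-- A family of sets in `ℝ^d` is strictly antipodal if for each pair of points
`p ∈ A i`, `q ∈ A j` with `i ≠ j` there is a linear functional `φ` with
`φ p < φ r < φ q` for every other point `r` of the union. -/
def StrictlyAntipodal {d : ℕ} {ι : Type*} (A : ι → Set (Fin d → ℝ)) : Prop :=
  ∀ i j, i ≠ j → ∀ p ∈ A i, ∀ q ∈ A j, ∃ φ : (Fin d → ℝ) →ₗ[ℝ] ℝ,
    ∀ r ∈ ⋃ t, A t, r ≠ p → r ≠ q → φ p < φ r ∧ φ r < φ q

/-- `aconst d` = `a(d)` : the largest `k` such that for every `m` there is a strictly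
antipodal family of `k` sets in `ℝ^d`, each of size at least `m`. -/
def aconst (d : ℕ) : ℕ :=
  sSup {k | ∀ m : ℕ, ∃ A : Fin k → Finset (Fin d → ℝ),
    (∀ i, m ≤ (A i).card) ∧ StrictlyAntipodal (fun i => ((A i : Set (Fin d → ℝ))))}

/-- The set of midpoints between points in different members of a family of finite sets. -/
def midSet {d : ℕ} {ι : Type*} (B : ι → Finset (Fin d → ℝ)) : Set (Fin d → ℝ) :=
  {x | ∃ i j, i ≠ j ∧ ∃ p ∈ B i, ∃ q ∈ B j, x = midpoint ℝ p q}

/-- The set of differences between points in different members of a family of sets. -/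
def diffSet {d : ℕ} {ι : Type*} (A : ι → Set (Fin d → ℝ)) : Set (Fin d → ℝ) :=
  {x | ∃ i j, i ≠ j ∧ ∃ p ∈ A i, ∃ q ∈ A j, x = p - q}

/-- If, in a strictly convex norm, the distance between points of different `A i`'s is
always equal to the diameter `D > 0` of the union, while each `A i` has diameter `< D`,
then `{A₁, …, A_k}` is a strictly antipodal family. -/
theorem strictlyAntipodal_of_diameter (d k : ℕ) (ν : StrictNorm d)
    (A : Fin k → Finset (Fin d → ℝ)) (D : ℝ) (hD : 0 < D)
    (hub : ∀ p ∈ ⋃ i, ((A i : Set (Fin d → ℝ))), ∀ q ∈ ⋃ i, ((A i : Set (Fin d → ℝ))),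
      ν.toFun (p - q) ≤ D)
    (hcross : ∀ i j, i ≠ j → ∀ p ∈ A i, ∀ q ∈ A j, ν.toFun (p - q) = D)
    (hsmall : ∀ i, ∀ p ∈ A i, ∀ q ∈ A i, ν.toFun (p - q) < D) :
    StrictlyAntipodal (fun i => ((A i : Set (Fin d → ℝ)))) := by
  have νnonneg : ∀ x, 0 ≤ ν.toFun x := by
    intro x
    have h1 : ν.toFun (x + (-1 : ℝ) • x) ≤ ν.toFun x + ν.toFun ((-1 : ℝ) • x) := ν.add_le _ _
    have h2 : ν.toFun ((-1 : ℝ) • x) = ν.toFun x := by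
      rw [ν.smul_eq]; simp
    have h3 : x + (-1 : ℝ) • x = 0 := by simp
    rw [h3, h2] at h1
    have h0 : ν.toFun 0 = 0 := (ν.eq_zero_iff 0).mpr rfl
    linarith [h1, h0 ▸ h1]
  intro i j hij p hp q hq
  simp only [Finset.mem_coe] at hp hq
  set u := q - p with hu_def
  have hνu : ν.toFun u = D := by
    have h := hcross j i hij.symm q hq p hp
    exact h
  have hu0 : u ≠ 0 := by
    intro h
    rw [h, (ν.eq_zero_iff 0).mpr rfl] at hνu
    exact absurd hνu.symm (ne_of_gt hD)
  -- Hahn-Banach: get φ ≤ ν with φ u = D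
  have H : ∀ c : ℝ, c • u = 0 → c • (D : ℝ) = 0 := by
    intro c hc
    rcases smul_eq_zero.mp hc with h | h
    · simp [h]
    · exact absurd h hu0
  set f : (Fin d → ℝ) →ₗ.[ℝ] ℝ := LinearPMap.mkSpanSingleton' u D H with hf_def
  obtain ⟨φ, hφeq, hφle⟩ := exists_extension_of_le_sublinear f ν.toFun
    (fun c hc x => by rw [ν.smul_eq]; rw [abs_of_pos hc]) (ν.add_le)
    (by
      rintro ⟨x, hx⟩
      rw [LinearPMap.domain_mkSpanSingleton] at hx
      obtain ⟨c, rfl⟩ := Submodule.mem_span_singleton.mp hx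
      rw [LinearPMap.mkSpanSingleton'_apply]
      rw [ν.smul_eq, hνu, smul_eq_mul, RingHom.id_apply]
      rcases le_or_gt 0 c with h | h
      · rw [abs_of_nonneg h]
      · nlinarith [abs_nonneg c])
  have hφu : φ u = D := by
    have hmem : u ∈ f.domain := by
      rw [hf_def, LinearPMap.domain_mkSpanSingleton]
      exact Submodule.mem_span_singleton_self u
    have := hφeq ⟨u, hmem⟩
    rwa [LinearPMap.mkSpanSingleton'_apply_self] at this
  -- key: exposedness
  have key : ∀ x, ν.toFun x ≤ D → x ≠ u → φ x < D := by
    intro x hx hxu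
    rcases lt_or_eq_of_le hx with h | h
    · exact lt_of_le_of_lt (hφle x) h
    · -- ν x = D
      have hx0 : x ≠ 0 := by
        intro h0; rw [h0, (ν.eq_zero_iff 0).mpr rfl] at h; exact absurd h.symm (ne_of_gt hD)
      have hD' : (D : ℝ) ≠ 0 := ne_of_gt hD
      have hsx : ν.toFun (D⁻¹ • x) = 1 := by
        rw [ν.smul_eq, abs_of_pos (inv_pos.mpr hD), h]
        field_simp
      have hsu : ν.toFun (D⁻¹ • u) = 1 := by
        rw [ν.smul_eq, abs_of_pos (inv_pos.mpr hD), hνu]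
        field_simp
      have hne : D⁻¹ • x ≠ D⁻¹ • u := by
        intro heq
        have := congrArg (fun z => D • z) heq
        simp only [smul_smul, mul_inv_cancel₀ hD', one_smul] at this
        exact hxu this
      have hsc := ν.strictly_convex _ _ hsx hsu hne
      have hmid : ν.toFun ((1/2 : ℝ) • (x + u)) < D := by
        have heq : (1/2 : ℝ) • (x + u) = D • ((1/2 : ℝ) • (D⁻¹ • x + D⁻¹ • u)) := by
          match_scalars <;> (field_simp; try ring)
        rw [heq, ν.smul_eq, abs_of_pos hD]
        nlinarith [hsc]
      have hφmid : φ ((1/2 : ℝ) • (x + u)) ≤ ν.toFun ((1/2 : ℝ) • (x + u)) := hφle _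
      rw [map_smul, map_add, hφu, smul_eq_mul] at hφmid
      linarith
  -- conclude
  refine ⟨φ, ?_⟩
  intro r hr hrp hrq
  have hpmem : p ∈ ⋃ t, ((A t : Set (Fin d → ℝ))) := Set.mem_iUnion.mpr ⟨i, hp⟩
  have hqmem : q ∈ ⋃ t, ((A t : Set (Fin d → ℝ))) := Set.mem_iUnion.mpr ⟨j, hq⟩
  have h1 : φ (q - r) < D := by
    apply key _ (hub q hqmem r hr)
    intro h
    apply hrp
    have h' : q - r = q - p := h
    exact sub_right_injective h'
  have h2 : φ (r - p) < D := by
    apply key _ (hub r hr p hpmem)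
    intro h
    apply hrq
    have h' : r - p = q - p := h
    exact sub_left_injective h'
  have hsum : φ (q - r) + φ (r - p) = D := by
    rw [← map_add]
    have : (q - r) + (r - p) = u := by rw [hu_def]; abel
    rw [this, hφu]
  constructor
  · have : φ r - φ p = φ (r - p) := (map_sub φ r p).symm
    linarith [h1, hsum, this]
  · have : φ q - φ r = φ (q - r) := (map_sub φ q r).symm
    linarith [h2, hsum, this]
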